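/- Let p be a prime, G a torsion-free abelian group, I an index set, and φ : ⊕_{i∈I} ℤ_(p) → G an injective group homomorphism whose image is a pure subgroup of G. Let e_i ∈ ⊕_{i∈I} ℤ_(p) denote the element which is 1 in coordinate i and 0 elsewhere. Then the family (φ(e_i) + pG)_{i∈I} is linearly independent over the field 𝔽_p in the 𝔽_p-vector space G/pG; in particular, dim_{𝔽_p}(G/pG) ≥ |I|. -/

import Mathlib

/-- `H` is a pure subgroup: `nG ∩ H = nH` for every `n : ℕ`. -/
def AddSubgroup.IsPure {G : Type*} [AddCommGroup G] (H : AddSubgroup G) : Prop :=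
  ∀ (n : ℕ), ∀ h ∈ H, (∃ g : G, n • g = h) → ∃ h' ∈ H, n • h' = h

/-- `ℤ_(p)`: the subgroup of `ℚ` of rationals whose (reduced) denominator is coprime to `p`,
i.e. rationals that can be written as `n/m` with `m` coprime to `p`. -/
def ZLoc (p : ℕ) (hp : p.Prime) : AddSubgroup ℚ where
  carrier := {q : ℚ | ¬ p ∣ q.den}
  zero_mem' := by
    simp only [Set.mem_setOf_eq, Rat.den_ofNat]
    exact fun h => hp.one_lt.ne' (Nat.dvd_one.mp h)
  add_mem' := by
    intro a b ha hb hdvd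
    rcases (Nat.Prime.dvd_mul hp).mp (hdvd.trans (Rat.add_den_dvd a b)) with h | h
    · exact ha h
    · exact hb h
  neg_mem' := by
    intro a ha
    simpa only [Set.mem_setOf_eq, Rat.neg_den] using ha

lemma one_mem_ZLoc (p : ℕ) (hp : p.Prime) : (1 : ℚ) ∈ ZLoc p hp := by
  show ¬ p ∣ (1 : ℚ).den
  simp only [Rat.den_ofNat, Nat.dvd_one]
  exact hp.one_lt.ne'

/-- `pG`: the subgroup of multiples of `p` in `G`. -/
def pMul (p : ℕ) (G : Type*) [AddCommGroup G] : AddSubgroup G :=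
  (nsmulAddMonoidHom p : G →+ G).range

/-- `G/pG` is a module (vector space, for `p` prime) over `𝔽_p = ZMod p`. -/
noncomputable instance modPModule (p : ℕ) (G : Type*) [AddCommGroup G] :
    Module (ZMod p) (G ⧸ pMul p G) :=
  QuotientAddGroup.zmodModule (fun x => ⟨x, rfl⟩)

universe u

/-- If `φ : ⊕_{i ∈ I} ℤ_(p) → G` is an injective homomorphism into a torsion-free abelian
group with pure image, then the images of the canonical basis vectors `e i` are linearly
independent over `𝔽_p` in `G/pG`; in particular `dim_{𝔽_p}(G/pG) ≥ |I|`. -/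
theorem linearIndependent_of_pure_embedding_of_directSum_ZLoc
    {p : ℕ} (hp : p.Prime) {G : Type u} [AddCommGroup G] [NoZeroSMulDivisors ℤ G]
    {I : Type u} [DecidableEq I]
    (φ : (DirectSum I fun _ : I => ↥(ZLoc p hp)) →+ G)
    (hinj : Function.Injective φ) (hpure : φ.range.IsPure)
    (e : I → DirectSum I fun _ : I => ↥(ZLoc p hp))
    (he : ∀ i : I, e i = DirectSum.of (fun _ : I => ↥(ZLoc p hp)) i ⟨1, one_mem_ZLoc p hp⟩) :
    LinearIndependent (ZMod p)
      (fun i : I => (QuotientAddGroup.mk (φ (e i)) : G ⧸ pMul p G)) ∧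
    Cardinal.mk I ≤ Module.rank (ZMod p) (G ⧸ pMul p G) := by
  haveI : NeZero p := ⟨hp.ne_zero⟩
  haveI : Fact p.Prime := ⟨hp⟩
  have hli : LinearIndependent (ZMod p)
      (fun i : I => (QuotientAddGroup.mk (φ (e i)) : G ⧸ pMul p G)) := by
    rw [linearIndependent_iff']
    intro s c hsum i his
    -- lift coefficients to ℕ
    set n : I → ℕ := fun i => (c i).val with hn
    have hc : ∀ i, c i = ((n i : ℕ) : ZMod p) := fun i => (ZMod.natCast_zmod_val (c i)).symm
    -- rewrite the sum using natural smul
    have hsum' : QuotientAddGroup.mk (∑ j ∈ s, n j • φ (e j)) = (0 : G ⧸ pMul p G) := by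
      rw [← hsum]
      show QuotientAddGroup.mk' (pMul p G) _ = _
      rw [map_sum]
      refine Finset.sum_congr rfl (fun j _ => ?_)
      rw [hc j, Nat.cast_smul_eq_nsmul (ZMod p) (n j), map_nsmul]
      rfl
    -- so the sum is in pG
    rw [QuotientAddGroup.eq_zero_iff] at hsum'
    obtain ⟨g, hg⟩ := hsum'
    -- the sum is φ of something
    have hmem : (∑ j ∈ s, n j • φ (e j)) ∈ φ.range := by
      refine ⟨∑ j ∈ s, n j • e j, ?_⟩
      rw [map_sum]
      exact Finset.sum_congr rfl (fun j _ => map_nsmul φ _ _)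
    obtain ⟨h', hh'mem, hh'⟩ := hpure p _ hmem ⟨g, hg⟩
    obtain ⟨x, rfl⟩ := hh'mem
    -- p • x = ∑ n j • e j
    have hx : p • x = ∑ j ∈ s, n j • e j := by
      apply hinj
      rw [map_nsmul, map_sum, hh']
      exact Finset.sum_congr rfl (fun j _ => (map_nsmul φ _ _).symm)
    -- evaluate at coordinate i
    have hxi : p • (x i) = n i • (⟨1, one_mem_ZLoc p hp⟩ : ↥(ZLoc p hp)) := by
      have h0 := DFunLike.congr_fun hx i
      rw [DFinsupp.nsmul_apply, DFinsupp.finset_sum_apply] at h0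
      rw [h0, Finset.sum_eq_single i]
      · rw [DFinsupp.nsmul_apply, he i, DirectSum.of_eq_same]
      · intro j _ hji
        rw [DFinsupp.nsmul_apply, he j, DirectSum.of_eq_of_ne _ _ _ hji.symm, smul_zero]
      · exact fun h => absurd his h
    -- in ℚ : p * x_i = n i
    have hq : (p : ℚ) * ((x i : ℚ)) = (n i : ℚ) := by
      have := congrArg (fun z : ↥(ZLoc p hp) => (z : ℚ)) hxi
      simpa [nsmul_eq_mul] using this
    -- show p ∣ n i
    have hden : ¬ p ∣ (x i : ℚ).den := (x i).2
    have hdvd : (p : ℤ) ∣ (n i : ℤ) := by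
      set q : ℚ := (x i : ℚ) with hqdef
      have hnum : (p : ℤ) * q.num = (n i : ℤ) * (q.den : ℤ) := by
        have h2 : ((p : ℤ) * q.num : ℚ) = ((n i : ℤ) * (q.den : ℤ) : ℚ) := by
          push_cast
          rw [← Rat.num_div_den q] at hq
          field_simp at hq ⊢
          linarith [hq]
        exact_mod_cast h2
      have : (p : ℤ) ∣ (n i : ℤ) * (q.den : ℤ) := ⟨q.num, hnum.symm⟩
      rcases (Int.Prime.dvd_mul' (by exact_mod_cast hp) this) with h | h
      · exact h
      · exact absurd (Int.ofNat_dvd.mp (by exact_mod_cast h)) hden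
    have hpn : p ∣ n i := Int.ofNat_dvd.mp (by exact_mod_cast hdvd)
    rw [hc i, ZMod.natCast_eq_zero_iff]
    exact hpn
  exact ⟨hli, hli.cardinal_le_rank⟩
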